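/- arXiv:1906.05154 — 4 statements merged into one kernel-verified Lean document; each statement's English description precedes it below -/
import Mathlib

section
/- Let f : ℝ → ℝ be continuous, non-increasing with f(0)=0, f < 0 on (0,∞), and suppose G(x) = ∫_x^∞ dt/(-f(t)) is finite for all x > 0. Let φ = G⁻¹ : (0,∞) → (0,∞) be the inverse of G. Then φ is differentiable, decreasing, satisfies φ'(x) = f(φ(x)) for all x > 0, and φ(x) → +∞ as x → 0⁺. -/
open MeasureTheory Set Filter Topology

theorem stmt1 (f : ℝ → ℝ) (hf_cont : Continuous f) (hf_anti : Antitone f)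
    (hf0 : f 0 = 0) (hf_neg : ∀ y > 0, f y < 0)
    (hint : ∀ x > 0, IntegrableOn (fun t => 1 / (-f t)) (Ioi x))
    (G : ℝ → ℝ) (hG : ∀ x > 0, G x = ∫ t in Ioi x, 1 / (-f t))
    (φ : ℝ → ℝ) (hφ_pos : ∀ x > 0, 0 < φ x)
    (hφ_inv : ∀ x > 0, G (φ x) = x) (hinv_φ : ∀ x > 0, φ (G x) = x) :
    (∀ x > 0, HasDerivAt φ (f (φ x)) x) ∧ StrictAntiOn φ (Ioi 0) ∧
      Tendsto φ (𝓝[>] 0) atTop := by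
  set g : ℝ → ℝ := fun t => 1 / (-f t) with hg_def
  have hgpos : ∀ t > 0, 0 < g t := fun t ht => by
    have h := hf_neg t ht
    have : (0:ℝ) < -f t := by linarith
    exact div_pos one_pos this
  have hgcont : ContinuousOn g (Ioi 0) := by
    apply ContinuousOn.div continuousOn_const hf_cont.neg.continuousOn
    intro t ht
    have := hf_neg t ht
    refine neg_ne_zero.mpr ?_
    exact ne_of_lt this
  -- decomposition of G
  have hdec : ∀ a b : ℝ, 0 < a → a ≤ b → G a = (∫ t in Ioc a b, g t) + G b := by
    intro a b ha hab
    have hb : 0 < b := lt_of_lt_of_le ha hab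
    rw [hG a ha, hG b hb]
    rw [← MeasureTheory.setIntegral_union (Ioc_disjoint_Ioi le_rfl) measurableSet_Ioi
      ((hint a ha).mono_set Ioc_subset_Ioi_self) (hint b hb)]
    rw [Ioc_union_Ioi_eq_Ioi hab]
  -- positivity of the interval pieces
  have hpiece : ∀ a b : ℝ, 0 < a → a < b → 0 < ∫ t in Ioc a b, g t := by
    intro a b ha hab
    rw [← intervalIntegral.integral_of_le hab.le]
    apply intervalIntegral.intervalIntegral_pos_of_pos_on
    · rw [intervalIntegrable_iff_integrableOn_Ioc_of_le hab.le]
      exact (hint a ha).mono_set Ioc_subset_Ioi_self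
    · intro t ht
      exact hgpos t (ha.trans ht.1)
    · exact hab
  -- G is strictly antitone on Ioi 0
  have hGanti : StrictAntiOn G (Ioi 0) := by
    intro a ha b hb hab
    have := hdec a b ha hab.le
    have hp := hpiece a b ha hab
    linarith
  -- G is positive on Ioi 0
  have hGpos : ∀ x > 0, 0 < G x := by
    intro x hx
    have h1 : G (x + 1) < G x := hGanti hx (by linarith : (0:ℝ) < x + 1) (by linarith)
    have h2 : 0 ≤ G (x + 1) := by
      rw [hG (x + 1) (by linarith)]
      apply setIntegral_nonneg measurableSet_Ioi
      intro t ht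
      exact (hgpos t (by linarith [mem_Ioi.mp ht])).le
    linarith
  -- φ is strictly antitone on Ioi 0
  have hφanti : StrictAntiOn φ (Ioi 0) := by
    intro a ha b hb hab
    by_contra h
    push_neg at h
    have : G (φ b) ≤ G (φ a) := by
      rcases eq_or_lt_of_le h with h' | h'
      · rw [h']
      · exact (hGanti (hφ_pos a ha) (hφ_pos b hb) h').le
    rw [hφ_inv a ha, hφ_inv b hb] at this
    exact absurd this (not_le.mpr hab)
  -- φ is continuous on Ioi 0
  have hφcont : ∀ x > 0, ContinuousAt φ x := by
    intro x hx
    rw [ContinuousAt, tendsto_order]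
    constructor
    · intro b hb
      rcases le_or_gt b 0 with hb0 | hb0
      · filter_upwards [isOpen_Ioi.mem_nhds hx] with y hy
        exact lt_of_le_of_lt hb0 (hφ_pos y hy)
      · obtain ⟨p, hbp, hpx⟩ := exists_between hb
        have hp : 0 < p := hb0.trans hbp
        set y0 := G p with hy0
        have hy0pos : 0 < y0 := hGpos p hp
        have hφy0 : φ y0 = p := hinv_φ p hp
        -- y0 > x : since φ y0 = p < φ x and φ strict anti
        have hxy0 : x < y0 := by
          by_contra hle
          push_neg at hle
          rcases eq_or_lt_of_le hle with h' | h'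
          · rw [← h', hφy0] at hpx; exact absurd hpx (lt_irrefl _)
          · have := hφanti hy0pos hx h'
            rw [hφy0] at this
            exact absurd hpx (not_lt.mpr this.le)
        filter_upwards [isOpen_Ioo.mem_nhds (⟨hx, hxy0⟩ : x ∈ Ioo 0 y0)] with y hy
        have : φ y0 < φ y := hφanti hy.1 hy0pos hy.2
        rw [hφy0] at this
        exact hbp.trans this
    · intro b hb
      obtain ⟨p, hxp, hpb⟩ := exists_between hb
      have hp : 0 < p := (hφ_pos x hx).trans hxp
      set y0 := G p with hy0
      have hy0pos : 0 < y0 := hGpos p hp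
      have hφy0 : φ y0 = p := hinv_φ p hp
      have hy0x : y0 < x := by
        by_contra hle
        push_neg at hle
        rcases eq_or_lt_of_le hle with h' | h'
        · rw [h', hφy0] at hxp; exact absurd hxp (lt_irrefl _)
        · have := hφanti hx hy0pos h'
          rw [hφy0] at this
          exact absurd hxp (not_lt.mpr this.le)
      filter_upwards [isOpen_Ioi.mem_nhds (mem_Ioi.mpr hy0x)] with y hy
      have hypos : 0 < y := hy0pos.trans hy
      have : φ y < φ y0 := hφanti hy0pos hypos hy
      rw [hφy0] at this
      exact this.trans hpb
  -- G has derivative 1 / f p at p for p > 0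
  have hGderiv : ∀ p > 0, HasDerivAt G (1 / f p) p := by
    intro p hp
    have hgct : ContinuousAt g p := hgcont.continuousAt (isOpen_Ioi.mem_nhds hp)
    have hF : HasDerivAt (fun y => ∫ t in p..y, g t) (g p) p := by
      apply intervalIntegral.integral_hasDerivAt_right
      · rw [intervalIntegrable_iff]
        simp
      · exact ⟨Ioi 0, isOpen_Ioi.mem_nhds hp, (hgcont.aestronglyMeasurable measurableSet_Ioi)⟩
      · exact hgct
    have hF2 : HasDerivAt (fun y => G p - ∫ t in p..y, g t) (-(g p)) p := by
      exact ((hasDerivAt_const p (G p)).sub hF).congr_deriv (by simp)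
    have heq : G =ᶠ[𝓝 p] fun y => G p - ∫ t in p..y, g t := by
      filter_upwards [isOpen_Ioi.mem_nhds (mem_Ioi.mpr (half_lt_self hp))] with y hy
      have hy2 : (0:ℝ) < y := lt_trans (half_pos hp) hy
      rcases le_or_gt p y with hpy | hyp
      · have := hdec p y hp hpy
        rw [intervalIntegral.integral_of_le hpy]
        linarith
      · have := hdec y p hy2 hyp.le
        rw [intervalIntegral.integral_symm, intervalIntegral.integral_of_le hyp.le]
        linarith
    have : HasDerivAt G (-(g p)) p := hF2.congr_of_eventuallyEq heq
    have hrew : -(g p) = 1 / f p := by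
      simp only [hg_def]
      rw [div_neg, neg_neg]
    rwa [hrew] at this
  refine ⟨?_, hφanti, ?_⟩
  · -- derivative of φ
    intro x hx
    have hpx : 0 < φ x := hφ_pos x hx
    have hG' : HasDerivAt G (1 / f (φ x)) (φ x) := hGderiv (φ x) hpx
    have hf' : (1 : ℝ) / f (φ x) ≠ 0 := by
      have := hf_neg (φ x) hpx
      exact one_div_ne_zero (ne_of_lt this)
    have hfg : ∀ᶠ y in 𝓝 x, G (φ y) = y := by
      filter_upwards [isOpen_Ioi.mem_nhds hx] with y hy
      exact hφ_inv y hy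
    have := HasDerivAt.of_local_left_inverse (hφcont x hx) hG' hf' hfg
    have hrew : (1 / f (φ x))⁻¹ = f (φ x) := by
      rw [one_div, inv_inv]
    rwa [hrew] at this
  · -- tendsto atTop
    rw [tendsto_atTop]
    intro M
    set M' := max M 1 with hM'
    have hM'pos : 0 < M' := lt_of_lt_of_le one_pos (le_max_right M 1)
    set c := G M' with hc
    have hcpos : 0 < c := hGpos M' hM'pos
    have hφc : φ c = M' := hinv_φ M' hM'pos
    filter_upwards [Ioo_mem_nhdsGT_of_mem (⟨le_refl 0, hcpos⟩ : (0:ℝ) ∈ Ico 0 c)] with x hx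
    have : φ c < φ x := hφanti hx.1 hcpos hx.2
    rw [hφc] at this
    exact le_of_lt (lt_of_le_of_lt (le_max_left M 1) this)
end

section
/- Let f be continuous, non-increasing, negative on (0,∞), with G(x) = ∫_x^∞ dt/(-f(t)) < ∞ for all x > 0. Then y/(-f(y)) → 0 as y → ∞. Consequently, with φ = G⁻¹, the ratio φ(x)/(-φ'(x)) = φ(x)/(-f(φ(x))) tends to 0 as x → 0⁺. -/
open MeasureTheory Set Filter Topology

theorem stmt10 (f : ℝ → ℝ) (hf_cont : Continuous f) (hf_anti : Antitone f)
    (hf0 : f 0 = 0) (hf_neg : ∀ y > 0, f y < 0)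
    (hint : ∀ x > 0, IntegrableOn (fun t => 1 / (-f t)) (Ioi x))
    (G : ℝ → ℝ) (hG : ∀ x > 0, G x = ∫ t in Ioi x, 1 / (-f t))
    (φ : ℝ → ℝ) (hφ_pos : ∀ x > 0, 0 < φ x)
    (hφ_inv : ∀ x > 0, G (φ x) = x)
    (hφ_top : Tendsto φ (𝓝[>] 0) atTop) :
    Tendsto (fun y => y / (-f y)) atTop (𝓝 0) ∧
      Tendsto (fun x => φ x / (-f (φ x))) (𝓝[>] 0) (𝓝 0) := by
  set g : ℝ → ℝ := fun t => 1 / (-f t) with hg_def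
  have hg_int : IntegrableOn g (Ioi 1) := hint 1 one_pos
  have hg_nonneg : ∀ t > 0, 0 ≤ g t := fun t ht => by
    have h : 0 < -f t := by linarith [hf_neg t ht]
    positivity
  have hg_anti : ∀ s t : ℝ, 0 < s → s ≤ t → g t ≤ g s := by
    intro s t hs hst
    have h1 : -f s ≤ -f t := neg_le_neg (hf_anti hst)
    have h2 : 0 < -f s := by linarith [hf_neg s hs]
    simp only [hg_def, one_div]
    exact inv_anti₀ h2 h1
  have h1 : Tendsto (fun y : ℝ => ∫ t in (1:ℝ)..y, g t) atTop
      (𝓝 (∫ t in Ioi (1:ℝ), g t)) :=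
    intervalIntegral_tendsto_integral_Ioi 1 hg_int tendsto_id
  have h2 : Tendsto (fun y : ℝ => ∫ t in (1:ℝ)..(y/2), g t) atTop
      (𝓝 (∫ t in Ioi (1:ℝ), g t)) :=
    h1.comp (tendsto_id.atTop_div_const two_pos)
  have hdiff : Tendsto (fun y : ℝ =>
      2 * ((∫ t in (1:ℝ)..y, g t) - ∫ t in (1:ℝ)..(y/2), g t)) atTop (𝓝 0) := by
    have := (h1.sub h2).const_mul (2:ℝ)
    simpa using this
  have key : Tendsto (fun y => y / (-f y)) atTop (𝓝 0) := by
    refine squeeze_zero' ?_ ?_ hdiff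
    · filter_upwards [eventually_ge_atTop (1:ℝ)] with y hy
      have hy0 : (0:ℝ) < y := lt_of_lt_of_le one_pos hy
      have hfy : 0 < -f y := by linarith [hf_neg y hy0]
      positivity
    · filter_upwards [eventually_ge_atTop (2:ℝ)] with y hy
      have hy2 : (1:ℝ) ≤ y / 2 := by linarith
      have hy0 : (0:ℝ) < y := by linarith
      have hy2pos : (0:ℝ) < y / 2 := by linarith
      -- integrability on [y/2, y]
      have hint_sub : IntegrableOn g (Icc (y/2) y) := by
        apply (hint (1/2) (by norm_num)).mono_set
        intro t ht
        simp only [mem_Icc] at ht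
        simp only [mem_Ioi]
        linarith [ht.1]
      have hint_uIoc : IntervalIntegrable g volume (y/2) y := by
        rw [intervalIntegrable_iff_integrableOn_Icc_of_le (by linarith)]
        exact hint_sub
      have hconst : IntervalIntegrable (fun _ : ℝ => g y) volume (y/2) y :=
        intervalIntegrable_const
      have hmono : ∀ t ∈ Icc (y/2) y, (fun _ : ℝ => g y) t ≤ g t := by
        intro t ht
        exact hg_anti t y (by linarith [ht.1]) ht.2
      have hle : (y - y/2) * g y ≤ ∫ t in (y/2)..y, g t := by
        have := intervalIntegral.integral_mono_on (by linarith : y/2 ≤ y)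
          hconst hint_uIoc hmono
        rwa [intervalIntegral.integral_const, smul_eq_mul] at this
      have hsplit : (∫ t in (y/2)..y, g t)
          = (∫ t in (1:ℝ)..y, g t) - ∫ t in (1:ℝ)..(y/2), g t := by
        rw [eq_sub_iff_add_eq]
        rw [add_comm]
        apply intervalIntegral.integral_add_adjacent_intervals
        · rw [intervalIntegrable_iff_integrableOn_Icc_of_le hy2]
          apply (hint (1/2) (by norm_num)).mono_set
          intro t ht
          simp only [mem_Icc] at ht
          simp only [mem_Ioi]
          linarith [ht.1]
        · exact hint_uIoc
      have heq : y / (-f y) = y * g y := by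
        show y / (-f y) = y * (1 / (-f y)); rw [mul_one_div]
      have heq2 : y * g y = 2 * ((y - y/2) * g y) := by ring
      have hle2 : (y - y/2) * g y ≤
          (∫ t in (1:ℝ)..y, g t) - ∫ t in (1:ℝ)..(y/2), g t := by
        rw [← hsplit]; exact hle
      show y / (-f y) ≤ _
      rw [heq, heq2]
      linarith
  exact ⟨key, key.comp hφ_top⟩
end

section
/- Let h(y) = -f(y)·G(y)^{1-ρ} where ρ ∈ (0,1), f < 0 non-increasing on (0,∞), and G(y) = ∫_y^∞ dt/(-f(t)) < ∞. Then ∫_y^∞ 1/h(t) dt = G(y)^ρ/ρ for all y > 0; in particular 1/h is integrable at +∞. Moreover, if h is non-decreasing on [y₀, ∞) for some y₀, then y/h(y) → 0 as y → ∞. -/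
open MeasureTheory Set Filter Topology Real

theorem stmt16 (f G h : ℝ → ℝ) (ρ : ℝ) (hρ0 : 0 < ρ) (hρ1 : ρ < 1)
    (hf_cont : ContinuousOn f (Ioi 0)) (hf_neg : ∀ y > 0, f y < 0)
    (hf_anti : AntitoneOn f (Ioi 0))
    (hint : ∀ y > 0, IntegrableOn (fun t => 1 / (-f t)) (Ioi y))
    (hG : ∀ y > 0, G y = ∫ t in Ioi y, 1 / (-f t))
    (hG_pos : ∀ y > 0, 0 < G y)
    (hG' : ∀ y > 0, HasDerivAt G (-(1 / (-f y))) y)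
    (hh : ∀ y > 0, h y = (-f y) * G y ^ (1 - ρ)) :
    (∀ y > 0, IntegrableOn (fun t => 1 / h t) (Ioi y)) ∧
    (∀ y > 0, (∫ t in Ioi y, 1 / h t) = G y ^ ρ / ρ) ∧
    (∀ y₀ > (0:ℝ), MonotoneOn h (Ici y₀) →
        Tendsto (fun y => y / h y) atTop (𝓝 0)) := by
  have hfpos : ∀ y > (0:ℝ), 0 < -f y := fun y hy => neg_pos.2 (hf_neg y hy)
  have hhpos : ∀ y > (0:ℝ), 0 < h y := by
    intro y hy
    rw [hh y hy]
    exact mul_pos (hfpos y hy) (Real.rpow_pos_of_pos (hG_pos y hy) _)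
  -- G tends to 0 at infinity
  have hGtend : Tendsto G atTop (𝓝 0) := by
    have h1 : Tendsto (fun t => ∫ x in (1:ℝ)..t, 1/(-f x)) atTop
        (𝓝 (∫ x in Ioi (1:ℝ), 1/(-f x))) :=
      intervalIntegral_tendsto_integral_Ioi 1 (hint 1 one_pos) tendsto_id
    have heq : ∀ᶠ t in atTop, ((∫ x in Ioi (1:ℝ), 1/(-f x)) - ∫ x in (1:ℝ)..t, 1/(-f x)) = G t := by
      filter_upwards [eventually_ge_atTop (1:ℝ)] with t ht
      have ht0 : (0:ℝ) < t := lt_of_lt_of_le one_pos ht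
      rw [hG t ht0, intervalIntegral.integral_of_le ht, sub_eq_iff_eq_add]
      have hsplit : Ioi (1:ℝ) = Ioc 1 t ∪ Ioi t := (Ioc_union_Ioi_eq_Ioi ht).symm
      rw [hsplit, setIntegral_union (Ioc_disjoint_Ioi le_rfl) measurableSet_Ioi
        ((hint 1 one_pos).mono_set Ioc_subset_Ioi_self) (hint t ht0), add_comm]
    have := (Tendsto.const_sub (∫ x in Ioi (1:ℝ), 1/(-f x)) h1).congr' heq
    simpa using this
  -- key: antiderivative
  have hderiv : ∀ x > (0:ℝ), HasDerivAt (fun t => -(G t ^ ρ / ρ)) (1 / h x) x := by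
    intro x hx0
    have hGx := hG_pos x hx0
    have hfx := hfpos x hx0
    have H := (((hG' x hx0).rpow_const (p := ρ) (Or.inl (ne_of_gt hGx))).div_const ρ).neg
    refine HasDerivAt.congr_deriv (f := fun t => -(G t ^ ρ / ρ)) H ?_
    symm
    rw [hh x hx0, show ρ - 1 = -(1-ρ) by ring, Real.rpow_neg hGx.le]
    have h1ρ : G x ^ (1 - ρ) ≠ 0 := (Real.rpow_pos_of_pos hGx _).ne'
    have hfne : f x ≠ 0 := (hf_neg x hx0).ne
    have hρne : ρ ≠ 0 := hρ0.ne'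
    field_simp
  have hnonneg : ∀ x > (0:ℝ), 0 ≤ 1 / h x := fun x hx => (one_div_pos.2 (hhpos x hx)).le
  have htendg : Tendsto (fun t => -(G t ^ ρ / ρ)) atTop (𝓝 0) := by
    have hc : Tendsto (fun t => G t ^ ρ) atTop (𝓝 ((0:ℝ) ^ ρ)) :=
      (Real.continuousAt_rpow_const 0 ρ (Or.inr hρ0.le)).tendsto.comp hGtend
    rw [Real.zero_rpow (ne_of_gt hρ0)] at hc
    simpa using (hc.div_const ρ).neg
  have hIntegrable : ∀ y > (0:ℝ), IntegrableOn (fun t => 1 / h t) (Ioi y) := by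
    intro y hy
    exact integrableOn_Ioi_deriv_of_nonneg'
      (fun x hx => hderiv x (lt_of_lt_of_le hy hx))
      (fun x hx => hnonneg x (hy.trans hx)) htendg
  have hIntegral : ∀ y > (0:ℝ), (∫ t in Ioi y, 1 / h t) = G y ^ ρ / ρ := by
    intro y hy
    rw [integral_Ioi_of_hasDerivAt_of_nonneg'
      (fun x hx => hderiv x (lt_of_lt_of_le hy hx))
      (fun x hx => hnonneg x (hy.trans hx)) htendg]
    ring
  refine ⟨hIntegrable, hIntegral, ?_⟩
  intro y₀ hy₀ hmono
  -- squeeze: for large y, 0 ≤ y / h y ≤ 2 * (G (y/2) ^ ρ / ρ)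
  have hupper : Tendsto (fun y => 2 * (G (y/2) ^ ρ / ρ)) atTop (𝓝 0) := by
    have : Tendsto (fun y : ℝ => y / 2) atTop atTop :=
      tendsto_id.atTop_div_const two_pos
    have hc : Tendsto (fun y => G (y/2) ^ ρ) atTop (𝓝 ((0:ℝ) ^ ρ)) :=
      (Real.continuousAt_rpow_const 0 ρ (Or.inr hρ0.le)).tendsto.comp (hGtend.comp this)
    rw [Real.zero_rpow (ne_of_gt hρ0)] at hc
    simpa using (hc.div_const ρ).const_mul 2
  refine tendsto_of_tendsto_of_tendsto_of_le_of_le' tendsto_const_nhds hupper ?_ ?_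
  · filter_upwards [eventually_gt_atTop (0:ℝ)] with y hy
    exact div_nonneg hy.le (hhpos y hy).le
  · filter_upwards [eventually_ge_atTop (2 * y₀), eventually_gt_atTop (0:ℝ)] with y hy2 hy0
    have hy20 : 0 < y / 2 := by linarith
    have hy2y₀ : y₀ ≤ y / 2 := by linarith
    have hyy : y / 2 ≤ y := by linarith
    -- ∫ over Ioc (y/2) y ≥ (y/2) * (1/h y)
    have hconst : (1 / h y) * (volume (Ioc (y/2) y)).toReal ≤ ∫ t in Ioc (y/2) y, 1 / h t := by
      rw [← measureReal_def]
      apply setIntegral_ge_of_const_le_real measurableSet_Ioc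
      · exact (measure_Ioc_lt_top).ne
      · intro x hx
        have hx0 : 0 < x := lt_of_lt_of_le hy20 hx.1.le
        apply one_div_le_one_div_of_le (hhpos x hx0)
        exact hmono (le_trans hy2y₀ hx.1.le) (le_trans hy2y₀ hyy) hx.2
      · exact ((hIntegrable (y/2) hy20).mono_set Ioc_subset_Ioi_self)
    have hvol : (volume (Ioc (y/2) y)).toReal = y / 2 := by
      rw [Real.volume_Ioc]
      rw [ENNReal.toReal_ofReal (by linarith)]
      ring
    have hmonoI : (∫ t in Ioc (y/2) y, 1 / h t) ≤ ∫ t in Ioi (y/2), 1 / h t := by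
      apply setIntegral_mono_set (hIntegrable (y/2) hy20)
      · filter_upwards [ae_restrict_mem measurableSet_Ioi] with x hx
        exact hnonneg x (hy20.trans hx)
      · exact HasSubset.Subset.eventuallyLE Ioc_subset_Ioi_self
    rw [hvol] at hconst
    rw [hIntegral (y/2) hy20] at hmonoI
    have : (1 / h y) * (y / 2) ≤ G (y/2) ^ ρ / ρ := le_trans hconst hmonoI
    have hhy := hhpos y hy0
    rw [div_eq_mul_one_div y (h y), mul_comm]
    linarith
end

section
/- Monotone comparison for the terminal-value ODE: Fix η* > 0, Λ ≥ 0, and let f be continuous, non-increasing, f ≤ 0 on [0,∞). Let ϑ : (0,∞) → (0,∞) solve ϑ'(s) = Λ + f(ϑ(s))/η* with ϑ(s) → +∞ as s → 0⁺. If u : [0, T) → ℝ is C¹ and satisfies u'(t) ≥ -Λ - f(u(t))/η* for all t, and u(t) ≤ ϑ(T - ε - t) for t near T - ε holds for every ε ∈ (0, T), then u(t) ≤ ϑ(T - t) for all t ∈ [0, T). -/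
open Set Filter Topology

theorem stmt17 (f ϑ u : ℝ → ℝ) (ηs Λ T : ℝ)
    (hη : 0 < ηs) (hΛ : 0 ≤ Λ) (hT : 0 < T)
    (hf_cont : Continuous f) (hf_anti : Antitone f) (hf_np : ∀ y ≥ (0:ℝ), f y ≤ 0)
    (hϑ_pos : ∀ s > 0, 0 < ϑ s)
    (hϑ_ode : ∀ s > 0, HasDerivAt ϑ (Λ + f (ϑ s) / ηs) s)
    (hϑ_top : Tendsto ϑ (𝓝[>] 0) atTop)
    (hu_diff : ∀ t ∈ Ico (0:ℝ) T, DifferentiableAt ℝ u t)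
    (hu_sub : ∀ t ∈ Ico (0:ℝ) T, deriv u t ≥ -Λ - f (u t) / ηs)
    (hu_near : ∀ ε : ℝ, 0 < ε → ε < T →
        ∀ᶠ t in 𝓝[<] (T - ε), u t ≤ ϑ (T - ε - t)) :
    ∀ t ∈ Ico (0:ℝ) T, u t ≤ ϑ (T - t) := by
  intro t ht
  obtain ⟨ht0, htT⟩ := ht
  -- Step 1: for every ε ∈ (0, T - t), u t ≤ ϑ (T - ε - t)
  have key : ∀ ε : ℝ, 0 < ε → ε < T - t → u t ≤ ϑ (T - ε - t) := by
    intro ε hε hεT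
    set c := T - ε with hc
    have htc : t < c := by simp only [hc]; linarith
    have hcT : c < T := by simp only [hc]; linarith
    -- derivative of g s = u s - ϑ (c - s) on [0, c)
    have hg_deriv : ∀ s ∈ Ico (0:ℝ) c,
        HasDerivAt (fun x => u x - ϑ (c - x)) (deriv u s + (Λ + f (ϑ (c - s)) / ηs)) s := by
      intro s hs
      have hscT : s ∈ Ico (0:ℝ) T := ⟨hs.1, lt_trans hs.2 hcT⟩
      have h₂ := hϑ_ode (c - s) (by linarith [hs.2])
      have h₁ : HasDerivAt (fun x : ℝ => c - x) (-1) s := by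
        simpa using (hasDerivAt_id s).const_sub c
      have hcomp := h₂.comp s h₁
      have hu := (hu_diff s hscT).hasDerivAt
      have := hu.sub hcomp
      refine this.congr_deriv ?_
      ring
    -- find s₁ ∈ (t, c) where u s₁ ≤ ϑ (c - s₁)
    have h1 : ∀ᶠ s in 𝓝[<] c, u s ≤ ϑ (c - s) := hu_near ε hε (by linarith)
    have h2 : Ioo t c ∈ 𝓝[<] c := Ioo_mem_nhdsLT_of_mem ⟨htc, le_refl c⟩
    obtain ⟨s₁, hs₁le, hs₁mem⟩ := (h1.and (eventually_of_mem h2 fun x hx => hx)).exists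
    by_contra hcon
    push_neg at hcon
    -- the set where g ≤ 0 on [t, s₁]
    set g : ℝ → ℝ := fun x => u x - ϑ (c - x) with hg
    have hgt : 0 < g t := by simp only [hg]; linarith
    have hsub : Icc t s₁ ⊆ Ico (0:ℝ) c := fun x hx =>
      ⟨le_trans ht0 hx.1, lt_of_le_of_lt hx.2 hs₁mem.2⟩
    have hg_cont : ContinuousOn g (Icc t s₁) := fun x hx =>
      ((hg_deriv x (hsub hx)).continuousAt).continuousWithinAt
    set S : Set ℝ := Icc t s₁ ∩ g ⁻¹' Iic 0 with hS
    have hS_closed : IsClosed S :=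
      hg_cont.preimage_isClosed_of_isClosed isClosed_Icc isClosed_Iic
    have hs₁S : s₁ ∈ S := ⟨⟨le_of_lt hs₁mem.1, le_refl s₁⟩, by simp [hg]; linarith⟩
    have hS_ne : S.Nonempty := ⟨s₁, hs₁S⟩
    have hS_bdd : BddBelow S := ⟨t, fun x hx => hx.1.1⟩
    set s₀ := sInf S with hs₀def
    have hs₀S : s₀ ∈ S := hS_closed.csInf_mem hS_ne hS_bdd
    have hts₀ : t ≤ s₀ := le_csInf hS_ne fun x hx => hx.1.1
    have hts₀' : t < s₀ := by
      rcases lt_or_eq_of_le hts₀ with h | h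
      · exact h
      · exfalso
        have := hs₀S.2
        rw [← h] at this
        simp only [mem_preimage, mem_Iic] at this
        linarith
    -- g > 0 on [t, s₀)
    have hgpos : ∀ s ∈ Ico t s₀, 0 < g s := by
      intro s hs
      by_contra hns
      push_neg at hns
      have hsS : s ∈ S := ⟨⟨hs.1, le_trans (le_of_lt hs.2) hs₀S.1.2⟩, by
        simp only [mem_preimage, mem_Iic]; exact hns⟩
      exact absurd (csInf_le hS_bdd hsS) (not_le.mpr hs.2)
    -- g is monotone on [t, s₀]
    have hsub' : Icc t s₀ ⊆ Ico (0:ℝ) c := fun x hx =>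
      ⟨le_trans ht0 hx.1, lt_of_le_of_lt (le_trans hx.2 hs₀S.1.2) hs₁mem.2⟩
    have hmono : MonotoneOn g (Icc t s₀) := by
      apply monotoneOn_of_deriv_nonneg (convex_Icc t s₀)
      · exact fun x hx => ((hg_deriv x (hsub' hx)).continuousAt).continuousWithinAt
      · intro x hx
        rw [interior_Icc] at hx
        exact ((hg_deriv x (hsub' ⟨le_of_lt hx.1, le_of_lt hx.2⟩)).differentiableAt).differentiableWithinAt
      · intro x hx
        rw [interior_Icc] at hx
        have hxIco : x ∈ Ico (0:ℝ) c := hsub' ⟨le_of_lt hx.1, le_of_lt hx.2⟩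
        rw [(hg_deriv x hxIco).deriv]
        have hgx : 0 < g x := hgpos x ⟨le_of_lt hx.1, hx.2⟩
        have hux : ϑ (c - x) ≤ u x := by simp only [hg] at hgx; linarith
        have hfle : f (u x) ≤ f (ϑ (c - x)) := hf_anti hux
        have hdiv : f (u x) / ηs ≤ f (ϑ (c - x)) / ηs := by gcongr
        have hus := hu_sub x ⟨hxIco.1, lt_trans hxIco.2 hcT⟩
        linarith
    have h1 := hmono ⟨le_refl t, hts₀⟩ ⟨hts₀, le_refl s₀⟩ hts₀
    have h2 : g s₀ ≤ 0 := hs₀S.2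
    linarith
  -- Step 2: pass to the limit ε → 0⁺
  have hcont : ContinuousAt ϑ (T - t) := (hϑ_ode (T - t) (by linarith)).continuousAt
  have hmap : Tendsto (fun ε : ℝ => T - ε - t) (𝓝[>] 0) (𝓝 (T - t)) := by
    have : Tendsto (fun ε : ℝ => T - ε - t) (𝓝 0) (𝓝 (T - 0 - t)) := by
      exact ((tendsto_const_nhds.sub tendsto_id).sub tendsto_const_nhds)
    simpa using this.mono_left nhdsWithin_le_nhds
  have hlim : Tendsto (fun ε : ℝ => ϑ (T - ε - t)) (𝓝[>] 0) (𝓝 (ϑ (T - t))) :=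
    hcont.tendsto.comp hmap
  refine ge_of_tendsto hlim ?_
  filter_upwards [Ioo_mem_nhdsGT_of_mem (⟨le_refl 0, by linarith⟩ : (0:ℝ) ∈ Ico 0 (T - t))] with ε hε
  exact key ε hε.1 hε.2
end
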